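/- Let K be a field of characteristic 0, V a finite-dimensional K-vector space with basis S, and D the subgroup of GL(V) of all automorphisms that are diagonal with respect to S. Then the normalizer of D in GL(V) equals D·P(Perm(S)) = { d ∘ P_σ : d ∈ D, σ a permutation of S }, where P_σ ∈ GL(V) is the automorphism with P_σ(α) = σ(α) for all α ∈ S. -/

import Mathlib

section

variable {K V : Type*} [Field K] [CharZero K] [AddCommGroup V] [Module K V]
variable {S : Type*} [Fintype S] [DecidableEq S]

/-- The set `D` of all automorphisms of `V` which are diagonal with respect to the
basis `S` (each basis vector is mapped to a scalar multiple of itself). -/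
def DiagSet (b : Module.Basis S K V) : Set (V ≃ₗ[K] V) :=
  {g | ∀ s : S, ∃ c : K, g (b s) = c • b s}

/-- For a permutation `σ` of `S`, `P_σ ∈ GL(V)` is the automorphism determined by
`P_σ(α) = σ(α)` for every basis vector `α ∈ S`. -/
noncomputable def PermMap (b : Module.Basis S K V) (σ : Equiv.Perm S) : V ≃ₗ[K] V :=
  b.equiv b σ

lemma pred_symm (b : Module.Basis S K V) (g : V ≃ₗ[K] V) (σ : Equiv.Perm S)
    (hg : ∀ s, ∃ c : K, g (b s) = c • b (σ s)) :
    ∀ s, ∃ c : K, g.symm (b s) = c • b (σ⁻¹ s) := by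
  intro s
  obtain ⟨c, hc⟩ := hg (σ⁻¹ s)
  rw [show σ (σ⁻¹ s) = s by simp] at hc
  have hcne : c ≠ 0 := by
    intro h0
    rw [h0, zero_smul] at hc
    exact b.ne_zero _ (g.injective (by simpa using hc))
  refine ⟨c⁻¹, ?_⟩
  have h2 : b (σ⁻¹ s) = c • g.symm (b s) := by
    have := congrArg g.symm hc
    rwa [g.symm_apply_apply, map_smul] at this
  rw [h2, smul_smul, inv_mul_cancel₀ hcne, one_smul]

lemma pred_conj (b : Module.Basis S K V) (g : V ≃ₗ[K] V) (σ : Equiv.Perm S)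
    (hg : ∀ s, ∃ c : K, g (b s) = c • b (σ s)) :
    ∀ x ∈ DiagSet b, (g.symm.trans x).trans g ∈ DiagSet b := by
  intro x hx s
  obtain ⟨c, hc⟩ := pred_symm b g σ hg s
  obtain ⟨c', hc'⟩ := hx (σ⁻¹ s)
  obtain ⟨c'', hc''⟩ := hg (σ⁻¹ s)
  rw [show σ (σ⁻¹ s) = s by simp] at hc''
  refine ⟨c * c' * c'', ?_⟩
  simp only [LinearEquiv.trans_apply, hc, map_smul, hc', hc'', smul_smul]

/-- Let `K` be a field of characteristic `0`, `V` a finite-dimensional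
`K`-vector space with basis `S`, and `D ≤ GL(V)` the subgroup of automorphisms that
are diagonal with respect to `S`.  Then the normalizer of `D` in `GL(V)` equals
`D · P(Perm(S)) = { d ∘ P_σ : d ∈ D, σ a permutation of S }`; i.e. `g` normalizes `D`
(meaning `g D g⁻¹ = D`) iff `g = d ∘ P_σ` for some `d ∈ D` and permutation `σ`. -/
theorem normalizer_diag_eq [FiniteDimensional K V] (b : Module.Basis S K V) (g : V ≃ₗ[K] V) :
    (fun d : V ≃ₗ[K] V => (g.symm.trans d).trans g) '' DiagSet b = DiagSet b ↔
      ∃ d ∈ DiagSet b, ∃ σ : Equiv.Perm S, g = (PermMap b σ).trans d := by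
  constructor
  · intro h
    -- build a diagonal map with distinct eigenvalues
    classical
    set e := Fintype.equivFin S with he
    set w : S → Kˣ := fun s => Units.mk0 (((e s : ℕ) : K) + 1)
      (by
        have h1 : (((e s : ℕ) : K) + 1) = (((e s : ℕ) + 1 : ℕ) : K) := by push_cast; ring
        rw [h1]
        exact Nat.cast_ne_zero.mpr (Nat.succ_ne_zero _)) with hw
    have hwinj : Function.Injective w := by
      intro s s' hss
      have : (((e s : ℕ) : K) + 1) = (((e s' : ℕ) : K) + 1) := by
        have := congrArg Units.val hss
        simpa [hw] using this
      have : ((e s : ℕ) : K) = ((e s' : ℕ) : K) := by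
        exact add_right_cancel this
      have : (e s : ℕ) = (e s' : ℕ) := Nat.cast_injective this
      exact e.injective (Fin.ext this)
    set d0 : V ≃ₗ[K] V := b.equiv (b.unitsSMul w) (Equiv.refl S) with hd0
    have hd0apply : ∀ s, d0 (b s) = (w s : K) • b s := by
      intro s
      simp [hd0, Module.Basis.equiv_apply, Module.Basis.unitsSMul_apply, Units.smul_def]
    have hd0mem : d0 ∈ DiagSet b := fun s => ⟨w s, hd0apply s⟩
    rw [← h] at hd0mem
    obtain ⟨x, hx, hgx⟩ := hd0mem
    -- for each t, g (b t) is an eigenvector of d0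
    have key : ∀ t : S, ∃ c : K, d0 (g (b t)) = c • g (b t) := by
      intro t
      obtain ⟨c, hc⟩ := hx t
      refine ⟨c, ?_⟩
      have := congrArg (fun f : V ≃ₗ[K] V => f (g (b t))) hgx
      simp only [LinearEquiv.trans_apply, g.symm_apply_apply] at this
      rw [← this, hc, map_smul]
    -- hence it is a multiple of a single basis vector
    have key2 : ∀ t : S, ∃ s : S, ∃ a : K, a ≠ 0 ∧ g (b t) = a • b s := by
      intro t
      obtain ⟨c, hc⟩ := key t
      set a : S → K := fun s => b.repr (g (b t)) s with ha
      have hsum : g (b t) = ∑ s, a s • b s := (b.sum_repr _).symm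
      have hco : ∀ s, (w s : K) * a s = c * a s := by
        intro s
        have hL : d0 (g (b t)) = ∑ s, ((w s : K) * a s) • b s := by
          rw [hsum, map_sum]
          refine Finset.sum_congr rfl fun s _ => ?_
          rw [map_smul, hd0apply s, smul_smul, mul_comm]
        have hR : c • g (b t) = ∑ s, (c * a s) • b s := by
          rw [hsum, Finset.smul_sum]
          exact Finset.sum_congr rfl fun s _ => by rw [smul_smul]
        have h2 : (∑ s, ((w s : K) * a s) • b s) = ∑ s, (c * a s) • b s :=
          hL.symm.trans (hc.trans hR)
        have h3 : (fun s => (w s : K) * a s) = fun s => c * a s := by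
          have hL' := b.repr_sum_self (fun s => (w s : K) * a s)
          have hR' := b.repr_sum_self (fun s => c * a s)
          rw [← hL', ← hR', h2]
        exact congrFun h3 s
      have hne : ∃ s, a s ≠ 0 := by
        by_contra hall
        push_neg at hall
        have : g (b t) = 0 := by
          rw [hsum]
          exact Finset.sum_eq_zero fun s _ => by rw [hall s, zero_smul]
        exact b.ne_zero t (g.injective (by simpa using this))
      obtain ⟨s, hs⟩ := hne
      have hws : (w s : K) = c := mul_right_cancel₀ hs (hco s)
      refine ⟨s, a s, hs, ?_⟩
      rw [hsum]
      refine Finset.sum_eq_single s (fun s' _ hs' => ?_) (by simp)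
      by_cases h0 : a s' = 0
      · rw [h0, zero_smul]
      · exact absurd (hwinj (Units.ext (by
          rw [Units.val_mk0, Units.val_mk0] at *
          exact ((mul_right_cancel₀ h0 (hco s')).trans hws.symm : (w s' : K) = (w s : K))))) hs'
    choose τ a hane hτ using key2
    have hτinj : Function.Injective τ := by
      intro t t' htt
      have h1 : g (b t) = a t • b (τ t) := hτ t
      have h2 : g (b t') = a t' • b (τ t) := htt ▸ hτ t'
      have : g ((a t' * (a t)⁻¹) • b t) = g (b t') := by
        rw [map_smul, h1, h2, smul_smul, mul_assoc, inv_mul_cancel₀ (hane t), mul_one]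
      have h3 : (a t' * (a t)⁻¹) • b t = b t' := g.injective this
      by_contra hne
      have := congrArg (fun v => b.repr v t') h3
      simp [Module.Basis.repr_self, Finsupp.single_apply, hne, Ne.symm hne] at this
    set σ : Equiv.Perm S := Equiv.ofBijective τ
      ((Finite.injective_iff_bijective).mp hτinj) with hσ
    have hpred : ∀ s, ∃ c : K, g (b s) = c • b (σ s) := fun s => ⟨a s, hτ s⟩
    refine ⟨(PermMap b σ).symm.trans g, ?_, σ, ?_⟩
    · intro s
      obtain ⟨c, hc⟩ := hpred (σ⁻¹ s)
      rw [show σ (σ⁻¹ s) = s by simp] at hc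
      refine ⟨c, ?_⟩
      have : (PermMap b σ).symm (b s) = b (σ⁻¹ s) := by
        rw [PermMap, Module.Basis.equiv_symm, Module.Basis.equiv_apply]
        rfl
      rw [LinearEquiv.trans_apply, this, hc]
    · ext v
      simp [LinearEquiv.trans_apply, LinearEquiv.apply_symm_apply]
  · rintro ⟨d, hd, σ, rfl⟩
    have hpred : ∀ s, ∃ c : K, ((PermMap b σ).trans d) (b s) = c • b (σ s) := by
      intro s
      obtain ⟨c, hc⟩ := hd (σ s)
      exact ⟨c, by rw [LinearEquiv.trans_apply, PermMap, Module.Basis.equiv_apply, hc]⟩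
    set g := (PermMap b σ).trans d with hg
    apply Set.Subset.antisymm
    · rintro _ ⟨x, hx, rfl⟩
      exact pred_conj b g σ hpred x hx
    · intro y hy
      refine ⟨(g.trans y).trans g.symm, ?_, ?_⟩
      · have := pred_conj b g.symm σ⁻¹ (pred_symm b g σ hpred) y hy
        simpa using this
      · ext v
        simp
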